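/- Let n ≥ 2, c ≥ 1, and let e_{n,c} be the order of the image of the element b^{-n} a^{-n} (ab)^n in F/[F, R_{n,c}] (this image lies in the Schur multiplier M(R(2,n;c))). Then for every free group F̂ (on an arbitrary set) and every normal subgroup R̂ of F̂ such that F̂/R̂ is finite, has exponent dividing n, and is nilpotent of class at most c, the exponent of (R̂ ∩ [F̂,F̂])/[F̂,R̂] divides n·e_{n,c}. -/

import Mathlib

namespace Schur

open scoped commutatorElement

abbrev F : Type := FreeGroup (Fin 2)

def a : F := FreeGroup.of 0
def b : F := FreeGroup.of 1

/-- The element `b⁻ⁿ a⁻ⁿ (ab)ⁿ`. -/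
def w (n : ℕ) : F := (b ^ n)⁻¹ * (a ^ n)⁻¹ * (a * b) ^ n

/-- `R_{n,c}`: the normal closure of the `n`-th powers together with `γ_{c+1}(F)`.
Note `γ_{c+1}(F) = lowerCentralSeries F c` since `lowerCentralSeries F 0 = γ₁(F) = F`. -/
def Rnc (n c : ℕ) : Subgroup F :=
  Subgroup.normalClosure ({x : F | ∃ y : F, x = y ^ n} ∪ (Subgroup.lowerCentralSeries (⊤ : Subgroup F) c : Set F))

instance (n c : ℕ) : (Rnc n c).Normal := Subgroup.normalClosure_normal

theorem statement1 (n c : ℕ) (hn : 2 ≤ n) (hc : 1 ≤ c)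
    (e : ℕ) (he : e = orderOf ((w n : F) : F ⧸ ⁅(⊤ : Subgroup F), Rnc n c⁆))
    {α : Type} (R : Subgroup (FreeGroup α)) [R.Normal]
    [Finite (FreeGroup α ⧸ R)]
    (hexp : Monoid.exponent (FreeGroup α ⧸ R) ∣ n)
    (hnil : Subgroup.lowerCentralSeries (⊤ : Subgroup (FreeGroup α ⧸ R)) c = ⊥) :
    Monoid.exponent ((R ⊓ commutator (FreeGroup α)).map
      (QuotientGroup.mk' ⁅(⊤ : Subgroup (FreeGroup α)), R⁆)) ∣ n * e := by
  classical
  set N : Subgroup (FreeGroup α) := ⁅(⊤ : Subgroup (FreeGroup α)), R⁆ with hNdef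
  let mkN : FreeGroup α →* (FreeGroup α ⧸ N) := QuotientGroup.mk' N
  let mkR : FreeGroup α →* (FreeGroup α ⧸ R) := QuotientGroup.mk' R
  -- every n-th power lies in R
  have hpowR : ∀ x : FreeGroup α, x ^ n ∈ R := by
    intro x
    have h1 : mkR (x ^ n) = 1 := by
      rw [map_pow]
      exact orderOf_dvd_iff_pow_eq_one.mp ((Monoid.order_dvd_exponent (mkR x)).trans hexp)
    have h2 : x ^ n ∈ mkR.ker := MonoidHom.mem_ker.mpr h1
    rwa [QuotientGroup.ker_mk'] at h2
  -- R maps into the center of FreeGroup α ⧸ N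
  have hcent : ∀ r ∈ R, mkN r ∈ Subgroup.center (FreeGroup α ⧸ N) := by
    intro r hr
    rw [Subgroup.mem_center_iff]
    intro q
    obtain ⟨g, rfl⟩ := QuotientGroup.mk'_surjective N q
    have h2 : (g * r) * (r * g)⁻¹ ∈ N := by
      have hid : (g * r) * (r * g)⁻¹ = ⁅g, r⁆ := by
        rw [commutatorElement_def]; group
      rw [hid]
      exact Subgroup.commutator_mem_commutator (Subgroup.mem_top g) hr
    have h3 : mkN ((g * r) * (r * g)⁻¹) = 1 := MonoidHom.mem_ker.mpr (by exact (QuotientGroup.eq_one_iff _).mpr h2)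
    rw [map_mul, map_inv, map_mul, map_mul] at h3
    rw [← map_mul, ← map_mul]
    exact mul_inv_eq_one.mp (by rwa [map_mul, map_mul])
  -- the subgroup W generated by the images of the "Witt" elements
  set S : Set (FreeGroup α ⧸ N) :=
    {q | ∃ x y : FreeGroup α, q = mkN ((y ^ n)⁻¹ * (x ^ n)⁻¹ * (x * y) ^ n)} with hSdef
  set W : Subgroup (FreeGroup α ⧸ N) := Subgroup.closure S with hWdef
  -- each generator of W is central and has e-th power one
  have hgen : ∀ q ∈ S, q ∈ Subgroup.center (FreeGroup α ⧸ N) ∧ q ^ e = 1 := by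
    rintro q ⟨x, y, rfl⟩
    constructor
    · apply hcent
      exact Subgroup.mul_mem _ (Subgroup.mul_mem _ (Subgroup.inv_mem _ (hpowR y))
        (Subgroup.inv_mem _ (hpowR x))) (hpowR (x * y))
    · -- via the homomorphism from F
      let φ : F →* FreeGroup α := FreeGroup.lift ![x, y]
      have hφa : φ a = x := by simp [φ, a]
      have hφb : φ b = y := by simp [φ, b]
      have hφR : Rnc n c ≤ R.comap φ := by
        apply Subgroup.normalClosure_le_normal
        rintro z (⟨u, rfl⟩ | hz)
        · simp only [Set.mem_preimage, SetLike.mem_coe, Subgroup.mem_comap, map_pow]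
          exact hpowR (φ u)
        · have h3 : φ z ∈ Subgroup.lowerCentralSeries (⊤ : Subgroup (FreeGroup α)) c :=
            Subgroup.lowerCentralSeries.map φ c ⟨z, hz, rfl⟩
          have h4 : mkR (φ z) ∈ Subgroup.lowerCentralSeries (⊤ : Subgroup (FreeGroup α ⧸ R)) c :=
            Subgroup.lowerCentralSeries.map mkR c ⟨_, h3, rfl⟩
          rw [hnil, Subgroup.mem_bot] at h4
          have h5 : φ z ∈ mkR.ker := MonoidHom.mem_ker.mpr h4
          rwa [QuotientGroup.ker_mk'] at h5
      have hφN : ⁅(⊤ : Subgroup F), Rnc n c⁆ ≤ N.comap φ := by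
        rw [← Subgroup.map_le_iff_le_comap, Subgroup.map_commutator]
        exact Subgroup.commutator_mono le_top (Subgroup.map_le_iff_le_comap.mpr hφR)
      let φbar : (F ⧸ ⁅(⊤ : Subgroup F), Rnc n c⁆) →* (FreeGroup α ⧸ N) :=
        QuotientGroup.map _ _ φ hφN
      have key : φbar ((w n : F) : F ⧸ ⁅(⊤ : Subgroup F), Rnc n c⁆)
          = mkN ((y ^ n)⁻¹ * (x ^ n)⁻¹ * (x * y) ^ n) := by
        show φbar (QuotientGroup.mk (w n)) = _
        rw [QuotientGroup.map_mk]
        simp only [w, map_mul, map_inv, map_pow, hφa, hφb]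
        rfl
      have hdvd : orderOf (mkN ((y ^ n)⁻¹ * (x ^ n)⁻¹ * (x * y) ^ n)) ∣ e := by
        rw [← key, he]
        exact orderOf_map_dvd φbar _
      exact orderOf_dvd_iff_pow_eq_one.mp hdvd
  -- every element of W is central and has e-th power one
  have hW : ∀ q ∈ W, q ∈ Subgroup.center (FreeGroup α ⧸ N) ∧ q ^ e = 1 := by
    intro q hq
    induction hq using Subgroup.closure_induction with
    | mem z hz => exact hgen z hz
    | one => exact ⟨Subgroup.one_mem _, one_pow e⟩
    | mul z z' hz hz' ihz ihz' =>
      refine ⟨Subgroup.mul_mem _ ihz.1 ihz'.1, ?_⟩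
      have hcomm : Commute z z' := ((Subgroup.mem_center_iff.mp ihz.1) z').symm
      rw [hcomm.mul_pow, ihz.2, ihz'.2, one_mul]
    | inv z hz ihz =>
      exact ⟨Subgroup.inv_mem _ ihz.1, by rw [inv_pow, ihz.2, inv_one]⟩
  haveI hWnormal : W.Normal := by
    constructor
    intro m hm g
    have hc' := (hW m hm).1
    have : g * m * g⁻¹ = m := by
      rw [Subgroup.mem_center_iff.mp hc' g, mul_assoc, mul_inv_cancel, mul_one]
    rwa [this]
  let mkW : (FreeGroup α ⧸ N) →* ((FreeGroup α ⧸ N) ⧸ W) := QuotientGroup.mk' W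
  -- the n-th power map modulo W is a homomorphism
  let f : FreeGroup α →* ((FreeGroup α ⧸ N) ⧸ W) :=
    MonoidHom.mk' (fun x => mkW (mkN (x ^ n))) (by
      intro x y
      show mkW (mkN ((x * y) ^ n)) = mkW (mkN (x ^ n)) * mkW (mkN (y ^ n))
      have h1 : mkW (mkN ((y ^ n)⁻¹ * (x ^ n)⁻¹ * (x * y) ^ n)) = 1 := by
        rw [QuotientGroup.mk'_apply, QuotientGroup.eq_one_iff]
        exact Subgroup.subset_closure ⟨x, y, rfl⟩
      have h2 : mkW (mkN ((x * y) ^ n)) = mkW (mkN (x ^ n)) * mkW (mkN (y ^ n)) *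
          mkW (mkN ((y ^ n)⁻¹ * (x ^ n)⁻¹ * (x * y) ^ n)) := by
        have hid : (x * y) ^ n = x ^ n * y ^ n * ((y ^ n)⁻¹ * (x ^ n)⁻¹ * (x * y) ^ n) := by
          group
        nth_rewrite 1 [hid]
        simp only [map_mul]
      rw [h2, h1, mul_one])
  -- f kills the commutator subgroup
  have hker : ∀ x ∈ commutator (FreeGroup α), f x = 1 := by
    intro x hx
    rw [commutator_eq_closure] at hx
    refine (Subgroup.closure_le f.ker).mpr ?_ hx
    rintro z ⟨g, h, rfl⟩
    show ⁅g, h⁆ ∈ f.ker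
    rw [MonoidHom.mem_ker, map_commutatorElement]
    have hcomm : Commute (mkN (g ^ n)) (mkN (h ^ n)) :=
      ((Subgroup.mem_center_iff.mp (hcent _ (hpowR g))) (mkN (h ^ n))).symm
    have hcomm2 : Commute (f g) (f h) := by
      show Commute (mkW (mkN (g ^ n))) (mkW (mkN (h ^ n)))
      exact hcomm.map mkW
    exact commutatorElement_eq_one_iff_commute.mpr hcomm2
  -- finish
  apply Monoid.exponent_dvd_of_forall_pow_eq_one
  rintro ⟨q, hq⟩
  obtain ⟨x, hx, rfl⟩ := hq
  rw [Subtype.ext_iff]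
  push_cast
  show (mkN x) ^ (n * e) = 1
  have hfx : f x = 1 := hker x hx.2
  have hmem : mkN (x ^ n) ∈ W := by
    have : mkW (mkN (x ^ n)) = 1 := hfx
    rwa [QuotientGroup.mk'_apply, QuotientGroup.eq_one_iff] at this
  calc (mkN x) ^ (n * e) = (mkN (x ^ n)) ^ e := by
        rw [pow_mul, map_pow]
      _ = 1 := (hW _ hmem).2

end Schur
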